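/- If r ≤ 5^t, then every factor of Φ of length r is a factor of φ^t(x) for some factor x of Φ of length 2. -/

import Mathlib

/-- the 5-uniform morphism φ: 0 ↦ 00101, 1 ↦ 11011 (on letters). -/
def phiMap (x : ℕ) : List ℕ := if x = 0 then [0, 0, 1, 0, 1] else [1, 1, 0, 1, 1]

/-- φ applied to a word. -/
def phiL (l : List ℕ) : List ℕ := l.flatMap phiMap

/-- `Phi m` is the `m`-th letter (0-indexed) of the fixed point Φ = φ^ω(0) of φ
starting with 0: `φ^[m+1]([0])` has length `5^(m+1) > m` and is a prefix of Φ. -/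
def Phi (m : ℕ) : ℕ := (phiL^[m + 1] [0]).getD m 0

/-- the length-`n` factor of `w` starting at position `i`. -/
def factorAt (w : ℕ → ℕ) (i n : ℕ) : List ℕ := (List.range n).map (fun j => w (i + j))

/-- `u` is a factor of the infinite word `w`. -/
def IsFactor (w : ℕ → ℕ) (u : List ℕ) : Prop := ∃ i, u = factorAt w i u.length

lemma phiMap_length (x : ℕ) : (phiMap x).length = 5 := by
  unfold phiMap; split <;> rfl

lemma phiL_append (a b : List ℕ) : phiL (a ++ b) = phiL a ++ phiL b := by
  simp [phiL]

lemma phiL_cons (a : ℕ) (l : List ℕ) : phiL (a :: l) = phiMap a ++ phiL l := by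
  simp [phiL]

lemma phiL_length (l : List ℕ) : (phiL l).length = 5 * l.length := by
  induction l with
  | nil => rfl
  | cons a l ih => simp [phiL_cons, ih, phiMap_length]; ring

lemma phiL_iter_length (k : ℕ) : (phiL^[k] [0]).length = 5 ^ k := by
  induction k with
  | zero => rfl
  | succ k ih => rw [Function.iterate_succ_apply', phiL_length, ih, pow_succ]; ring

lemma phiL_prefix {a b : List ℕ} (h : a <+: b) : phiL a <+: phiL b := by
  obtain ⟨c, rfl⟩ := h
  exact ⟨phiL c, (phiL_append a c).symm⟩

lemma phiL_infix {a b : List ℕ} (h : a <:+: b) : phiL a <:+: phiL b := by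
  obtain ⟨s, t, rfl⟩ := h
  exact ⟨phiL s, phiL t, by rw [← phiL_append, ← phiL_append]⟩

lemma iter_prefix_succ (k : ℕ) : phiL^[k] [0] <+: phiL^[k+1] [0] := by
  induction k with
  | zero => exact ⟨[0,1,0,1], rfl⟩
  | succ k ih =>
    rw [Function.iterate_succ_apply', Function.iterate_succ_apply']
    exact phiL_prefix ih

lemma iter_prefix {k k' : ℕ} (h : k ≤ k') : phiL^[k] [0] <+: phiL^[k'] [0] := by
  induction k' with
  | zero => simp_all
  | succ k' ih =>
    rcases Nat.eq_or_lt_of_le h with rfl | h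
    · exact List.prefix_refl _
    · exact (ih (Nat.lt_succ_iff.mp h)).trans (iter_prefix_succ k')

lemma getD_prefix {a b : List ℕ} (h : a <+: b) {m : ℕ} (hm : m < a.length) :
    b.getD m 0 = a.getD m 0 := by
  obtain ⟨c, rfl⟩ := h
  exact List.getD_append a c 0 m hm

lemma Phi_eq (k m : ℕ) (h : m < 5 ^ k) : (phiL^[k] [0]).getD m 0 = Phi m := by
  unfold Phi
  rcases le_total k (m + 1) with hk | hk
  · rw [getD_prefix (iter_prefix hk) (by rw [phiL_iter_length]; exact h)]
  · rw [getD_prefix (iter_prefix hk)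
      (by rw [phiL_iter_length]
          have := Nat.lt_pow_self (n := m + 1) (show (1:ℕ) < 5 by norm_num)
          omega)]

lemma phiL_getD (l : List ℕ) (q j : ℕ) (hq : q < l.length) (hj : j < 5) :
    (phiL l).getD (5 * q + j) 0 = (phiMap (l.getD q 0)).getD j 0 := by
  induction l generalizing q with
  | nil => simp at hq
  | cons a l ih =>
    cases q with
    | zero =>
      rw [phiL_cons]
      simp only [Nat.mul_zero, Nat.zero_add]
      rw [List.getD_append _ _ _ _ (by rw [phiMap_length]; exact hj)]
      rfl
    | succ q =>
      rw [phiL_cons]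
      have h5 : 5 * (q + 1) + j = (phiMap a).length + (5 * q + j) := by
        rw [phiMap_length]; ring
      rw [h5, List.getD_append_right _ _ _ _ (Nat.le_add_right _ _)]
      simp only [Nat.add_sub_cancel_left]
      rw [ih q (by simpa using hq)]
      rfl

lemma Phi_fix (q j : ℕ) (hj : j < 5) : Phi (5 * q + j) = (phiMap (Phi q)).getD j 0 := by
  have hq : q < 5 ^ (q + 1) := by
    have := Nat.lt_pow_self (n := q + 1) (show (1:ℕ) < 5 by norm_num)
    omega
  have h2 : 5 * q + j < 5 ^ (q + 2) := by
    have : 5 * q + j < 5 * (q + 1) := by omega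
    calc 5 * q + j < 5 * (q+1) := this
    _ ≤ 5 * 5 ^ (q+1) := by omega
    _ = 5 ^ (q+2) := by ring
  rw [← Phi_eq (q + 2) _ h2, ← Phi_eq (q + 1) q hq]
  rw [show q + 2 = (q+1) + 1 from rfl, Function.iterate_succ_apply']
  exact phiL_getD _ q j (by rw [phiL_iter_length]; exact hq) hj

lemma factorAt_length (w : ℕ → ℕ) (i n : ℕ) : (factorAt w i n).length = n := by
  simp [factorAt]

lemma factorAt_add (w : ℕ → ℕ) (i a b : ℕ) :
    factorAt w i (a + b) = factorAt w i a ++ factorAt w (i + a) b := by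
  simp only [factorAt, List.range_add, List.map_append, List.map_map]
  congr 1
  apply List.map_congr_left
  intro x _
  simp [Function.comp, Nat.add_assoc]

lemma phiMap_eq_range (c : ℕ) :
    (List.range 5).map (fun j => (phiMap c).getD j 0) = phiMap c := by
  unfold phiMap; split <;> rfl

lemma factor_phiL (q m : ℕ) :
    phiL (factorAt Phi q m) = factorAt Phi (5 * q) (5 * m) := by
  induction m generalizing q with
  | zero => rfl
  | succ m ih =>
    rw [show m + 1 = m + 1 from rfl, factorAt_add, phiL_append, ih]
    rw [show 5 * (m + 1) = 5 * m + 5 by ring, factorAt_add]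
    congr 1
    have h1 : factorAt Phi (5 * q + 5 * m) 5 = phiMap (Phi (q + m)) := by
      rw [← phiMap_eq_range (Phi (q + m))]
      simp only [factorAt]
      apply List.map_congr_left
      intro x hx
      rw [show 5 * q + 5 * m + x = 5 * (q + m) + x by ring]
      exact Phi_fix (q + m) x (List.mem_range.mp hx)
    rw [h1]
    show (List.map (fun j => Phi (q + m + j)) [0]).flatMap phiMap = _
    simp

lemma aux (t : ℕ) : ∀ r, r ≤ 5 ^ t + 1 → ∀ i, ∃ x : List ℕ,
    IsFactor Phi x ∧ x.length = 2 ∧ factorAt Phi i r <:+: phiL^[t] x := by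
  induction t with
  | zero =>
    intro r hr i
    refine ⟨factorAt Phi i 2, ⟨i, by rw [factorAt_length]⟩, factorAt_length _ _ _, ?_⟩
    simp only [Function.iterate_zero, id]
    apply List.IsPrefix.isInfix
    rw [show (2 : ℕ) = r + (2 - r) by omega, factorAt_add]
    exact ⟨_, rfl⟩
  | succ t ih =>
    intro r hr i
    set q := i / 5 with hq
    set s := i % 5 with hs
    set m := (s + r + 4) / 5 with hm
    have hP : (5:ℕ) ^ (t+1) = 5 * 5 ^ t := by ring
    have hmle : m ≤ 5 ^ t + 1 := by omega
    have hsr : s + r ≤ 5 * m := by omega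
    obtain ⟨x, hx, hx2, hinf⟩ := ih m hmle q
    refine ⟨x, hx, hx2, ?_⟩
    have h1 : factorAt Phi i r <:+: factorAt Phi (5 * q) (5 * m) := by
      rw [show 5 * m = s + (r + (5 * m - s - r)) by omega, factorAt_add, factorAt_add]
      have : 5 * q + s = i := by omega
      rw [this]
      exact ⟨factorAt Phi (5*q) s, factorAt Phi (i + r) (5*m - s - r), by simp⟩
    rw [← factor_phiL] at h1
    rw [Function.iterate_succ_apply']
    exact h1.trans (phiL_infix hinf)

/-- If `r ≤ 5^t`, then every length-`r` factor of Φ occurs as a factor (infix) of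
`φ^[t] x` for some length-2 factor `x` of Φ. -/
theorem Phi_factor_in_image (t r : ℕ) (hr : r ≤ 5 ^ t) (u : List ℕ)
    (hu : IsFactor Phi u) (hlen : u.length = r) :
    ∃ x : List ℕ, IsFactor Phi x ∧ x.length = 2 ∧ u <:+: phiL^[t] x := by
  obtain ⟨i, hi⟩ := hu
  rw [hlen] at hi
  rw [hi]
  exact aux t r (by omega) i
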